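/- Let M, H, L be unit quaternions with Re M = 0, Re H = 0, M·H = −H·M (equivalently, the commutator M H M⁻¹ H⁻¹ equals −1), and M·L = L·M. Then there exist a unit quaternion g and ℓ : ℝ such that g·M·g⁻¹ = i, g·H·g⁻¹ = j, and g·L·g⁻¹ = e^{ℓi}. Moreover e^{ℓi} is uniquely determined by (M,H,L): if g' is another unit quaternion with g'·M·g'⁻¹ = i, g'·H·g'⁻¹ = j and g'·L·g'⁻¹ = e^{ℓ'i}, then e^{ℓ'i} = e^{ℓi}. (This shows the space R^♮(N(K),K) of conjugacy classes of such triples, coming from the presented group ⟨μ_K, μ_H, μ_W, λ_K | μ_W = [μ_K, μ_H], [μ_K, λ_K] = 1⟩ with μ_K, μ_H traceless and μ_W ↦ −1, is a circle injecting into the pillowcase.) -/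

import Mathlib

open Quaternion

noncomputable section

/-- The quaternion `i`. -/
def qi : ℍ[ℝ] := ⟨0, 1, 0, 0⟩

/-- The quaternion `j`. -/
def qj : ℍ[ℝ] := ⟨0, 0, 1, 0⟩

/-- The quaternionic exponential `e^{tQ} = cos t + (sin t) • Q` for a pure unit
quaternion `Q`. -/
def expQ (t : ℝ) (Q : ℍ[ℝ]) : ℍ[ℝ] := ((Real.cos t : ℝ) : ℍ[ℝ]) + (Real.sin t) • Q

lemma qi_re : qi.re = 0 := rfl
lemma qi_imI : qi.imI = 1 := rfl
lemma qi_imJ : qi.imJ = 0 := rfl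
lemma qi_imK : qi.imK = 0 := rfl
lemma qj_re : qj.re = 0 := rfl
lemma qj_imI : qj.imI = 0 := rfl
lemma qj_imJ : qj.imJ = 1 := rfl
lemma qj_imK : qj.imK = 0 := rfl

lemma qi2 : qi * qi = -1 := by
  ext <;> simp [qi_re, qi_imI, qi_imJ, qi_imK, Quaternion.re_mul, Quaternion.imI_mul, Quaternion.imJ_mul, Quaternion.imK_mul]
lemma qj2 : qj * qj = -1 := by
  ext <;> simp [qj_re, qj_imI, qj_imJ, qj_imK, Quaternion.re_mul, Quaternion.imI_mul, Quaternion.imJ_mul, Quaternion.imK_mul]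
lemma qji : qj * qi = -(qi * qj) := by
  ext <;> simp [qi_re, qi_imI, qi_imJ, qi_imK, qj_re, qj_imI, qj_imJ, qj_imK, Quaternion.re_mul, Quaternion.imI_mul, Quaternion.imJ_mul, Quaternion.imK_mul]

lemma cand_conj (A B X Y : ℍ[ℝ]) (hA2 : A*A = -1) (hB2 : B*B = -1)
    (hAB : B*A = -(A*B)) (hX2 : X*X = -1) (hY2 : Y*Y = -1) (hXY : Y*X = -(X*Y)) :
    (1 - X*A - Y*B - X*(Y*(A*B))) * A = X * (1 - X*A - Y*B - X*(Y*(A*B))) ∧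
    (1 - X*A - Y*B - X*(Y*(A*B))) * B = Y * (1 - X*A - Y*B - X*(Y*(A*B))) := by
  have hAAt : ∀ t : ℍ[ℝ], A*(A*t) = -t := fun t => by rw [← mul_assoc, hA2, neg_one_mul]
  have hBBt : ∀ t : ℍ[ℝ], B*(B*t) = -t := fun t => by rw [← mul_assoc, hB2, neg_one_mul]
  have hXXt : ∀ t : ℍ[ℝ], X*(X*t) = -t := fun t => by rw [← mul_assoc, hX2, neg_one_mul]
  have hYYt : ∀ t : ℍ[ℝ], Y*(Y*t) = -t := fun t => by rw [← mul_assoc, hY2, neg_one_mul]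
  have hBAt : ∀ t : ℍ[ℝ], B*(A*t) = -(A*(B*t)) := fun t => by
    rw [← mul_assoc, ← mul_assoc, hAB, neg_mul]
  have hYXt : ∀ t : ℍ[ℝ], Y*(X*t) = -(X*(Y*t)) := fun t => by
    rw [← mul_assoc, ← mul_assoc, hXY, neg_mul]
  constructor <;>
  · simp only [sub_mul, one_mul, mul_assoc, hA2, hB2, hX2, hY2, hAB, hXY,
      hAAt, hBBt, hXXt, hYYt, hBAt, hYXt, mul_neg, neg_neg, mul_one, mul_sub, neg_sub]
    abel

lemma exists_u (M H : ℍ[ℝ]) (hM2 : M*M = -1) (hH2 : H*H = -1) (hHM : H*M = -(M*H)) :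
    ∃ u : ℍ[ℝ], u ≠ 0 ∧ u * M = qi * u ∧ u * H = qj * u := by
  have hiit : ∀ t : ℍ[ℝ], qi*(qi*t) = -t := fun t => by rw [← mul_assoc, qi2, neg_one_mul]
  have hjjt : ∀ t : ℍ[ℝ], qj*(qj*t) = -t := fun t => by rw [← mul_assoc, qj2, neg_one_mul]
  have hjit : ∀ t : ℍ[ℝ], qj*(qi*t) = -(qi*(qj*t)) := fun t => by
    rw [← mul_assoc, ← mul_assoc, qji, neg_mul]
  have hnX2 : (-qi)*(-qi) = -1 := by rw [neg_mul_neg, qi2]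
  have hnY2 : (-qj)*(-qj) = -1 := by rw [neg_mul_neg, qj2]
  have h0 := cand_conj M H qi qj hM2 hH2 hHM qi2 qj2 qji
  have h1 := cand_conj M H qi (-qj) hM2 hH2 hHM qi2 hnY2 (by simp [qji])
  have h2 := cand_conj M H (-qi) qj hM2 hH2 hHM hnX2 qj2 (by simp [qji])
  have h3 := cand_conj M H (-qi) (-qj) hM2 hH2 hHM hnX2 hnY2 (by simp [qji])
  set c0 : ℍ[ℝ] := 1 - qi*M - qj*H - qi*(qj*(M*H)) with hc0
  set c1 : ℍ[ℝ] := 1 - qi*M - (-qj)*H - qi*((-qj)*(M*H)) with hc1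
  set c2 : ℍ[ℝ] := 1 - (-qi)*M - qj*H - (-qi)*(qj*(M*H)) with hc2
  set c3 : ℍ[ℝ] := 1 - (-qi)*M - (-qj)*H - (-qi)*((-qj)*(M*H)) with hc3
  have hsum : c0 + c1 + c2 + c3 = 4 := by
    rw [hc0, hc1, hc2, hc3]; noncomm_ring; simp
  by_cases e0 : c0 ≠ 0
  · exact ⟨c0, e0, h0.1, h0.2⟩
  by_cases e1 : c1 ≠ 0
  · refine ⟨qi * c1, mul_ne_zero ?_ e1, ?_, ?_⟩
    · intro h; have := congrArg QuaternionAlgebra.imI h; simp [qi] at this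
    · simp only [mul_assoc, h1.1]
    · simp only [mul_assoc, h1.2, neg_mul, mul_neg, neg_neg, hiit, hjjt, hjit]
  by_cases e2 : c2 ≠ 0
  · refine ⟨qj * c2, mul_ne_zero ?_ e2, ?_, ?_⟩
    · intro h; have := congrArg QuaternionAlgebra.imJ h; simp [qj] at this
    · simp only [mul_assoc, h2.1, neg_mul, mul_neg, neg_neg, hiit, hjjt, hjit]
    · simp only [mul_assoc, h2.2]
  · have e3 : c3 ≠ 0 := by
      push_neg at e0 e1 e2
      rw [e0, e1, e2] at hsum
      simp at hsum
      rw [hsum]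
      intro h4
      have := congrArg QuaternionAlgebra.re h4
      rw [show ((4:ℍ[ℝ])) = ((4:ℕ):ℍ[ℝ]) by norm_num, Quaternion.re_natCast] at this
      norm_num at this
    refine ⟨qi * (qj * c3), ?_, ?_, ?_⟩
    · apply mul_ne_zero; · intro h; have := congrArg QuaternionAlgebra.imI h; simp [qi] at this
      apply mul_ne_zero; · intro h; have := congrArg QuaternionAlgebra.imJ h; simp [qj] at this
      exact e3
    · simp only [mul_assoc, h3.1, neg_mul, mul_neg, neg_neg, hiit, hjjt, hjit]
    · simp only [mul_assoc, h3.2, neg_mul, mul_neg, neg_neg, hiit, hjjt, hjit]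


set_option maxHeartbeats 2000000 in
/-- The space `R^♮(N(K),K)` is a circle: any triple `(M,H,L)` of unit quaternions with
`M, H` traceless, `MH = -HM` and `ML = LM` is conjugate to `(i, j, e^{ℓi})` for some
`ℓ : ℝ`, and the value `e^{ℓi}` is uniquely determined by the triple. -/
theorem earring_neighborhood_circle (M H L : ℍ[ℝ])
    (hMnorm : ‖M‖ = 1) (hMre : M.re = 0)
    (hHnorm : ‖H‖ = 1) (hHre : H.re = 0)
    (hLnorm : ‖L‖ = 1)
    (hanti : M * H = -(H * M))
    (hcomm : M * L = L * M) :
    ∃ g : ℍ[ℝ], ∃ ℓ : ℝ, ‖g‖ = 1 ∧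
      g * M * g⁻¹ = qi ∧ g * H * g⁻¹ = qj ∧ g * L * g⁻¹ = expQ ℓ qi ∧
      ∀ g' : ℍ[ℝ], ∀ ℓ' : ℝ, ‖g'‖ = 1 →
        g' * M * g'⁻¹ = qi → g' * H * g'⁻¹ = qj → g' * L * g'⁻¹ = expQ ℓ' qi →
        expQ ℓ' qi = expQ ℓ qi := by
  -- squared norms
  have hnsM : M.imI^2 + M.imJ^2 + M.imK^2 = 1 := by
    have h1 : normSq M = 1 := by rw [Quaternion.normSq_eq_norm_mul_self, hMnorm, mul_one]
    rw [Quaternion.normSq_def', hMre] at h1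
    nlinarith [h1]
  have hnsH : H.imI^2 + H.imJ^2 + H.imK^2 = 1 := by
    have h1 : normSq H = 1 := by rw [Quaternion.normSq_eq_norm_mul_self, hHnorm, mul_one]
    rw [Quaternion.normSq_def', hHre] at h1
    nlinarith [h1]
  have hM2 : M * M = -1 := by
    ext <;>
      simp [Quaternion.re_mul, Quaternion.imI_mul, Quaternion.imJ_mul, Quaternion.imK_mul,
        hMre] <;> nlinarith [hnsM]
  have hH2 : H * H = -1 := by
    ext <;>
      simp [Quaternion.re_mul, Quaternion.imI_mul, Quaternion.imJ_mul, Quaternion.imK_mul,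
        hHre] <;> nlinarith [hnsH]
  have hHM : H * M = -(M * H) := by rw [hanti, neg_neg]
  obtain ⟨u, hu, huM, huH⟩ := exists_u M H hM2 hH2 hHM
  set g : ℍ[ℝ] := (‖u‖⁻¹ : ℝ) • u with hgdef
  have hu' : ‖u‖ ≠ 0 := norm_ne_zero_iff.mpr hu
  have hg1 : ‖g‖ = 1 := by
    rw [hgdef, norm_smul, Real.norm_eq_abs, abs_inv, abs_norm, inv_mul_cancel₀ hu']
  have hg0 : g ≠ 0 := norm_ne_zero_iff.mp (by rw [hg1]; norm_num)
  have hgM : g * M = qi * g := by rw [hgdef, smul_mul_assoc, huM, mul_smul_comm]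
  have hgH : g * H = qj * g := by rw [hgdef, smul_mul_assoc, huH, mul_smul_comm]
  have hcM : g * M * g⁻¹ = qi := by rw [hgM, mul_assoc, mul_inv_cancel₀ hg0, mul_one]
  have hcH : g * H * g⁻¹ = qj := by rw [hgH, mul_assoc, mul_inv_cancel₀ hg0, mul_one]
  have hMg : M * g⁻¹ = g⁻¹ * qi := by
    have h1 : g * (M * g⁻¹) = g * (g⁻¹ * qi) := by
      rw [← mul_assoc, hgM, mul_assoc, mul_inv_cancel₀ hg0, mul_one, ← mul_assoc,
        mul_inv_cancel₀ hg0, one_mul]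
    exact mul_left_cancel₀ hg0 h1
  set L1 : ℍ[ℝ] := g * L * g⁻¹ with hL1def
  have hLi : qi * L1 = L1 * qi := by
    rw [hL1def]
    calc qi * (g * L * g⁻¹) = qi * g * L * g⁻¹ := by rw [mul_assoc, mul_assoc, mul_assoc]
      _ = g * M * L * g⁻¹ := by rw [hgM]
      _ = g * (L * M) * g⁻¹ := by rw [mul_assoc g M L, hcomm]
      _ = g * L * (M * g⁻¹) := by rw [← mul_assoc, mul_assoc]
      _ = g * L * g⁻¹ * qi := by rw [hMg, ← mul_assoc]
  have hK0 : L1.imK = 0 := by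
    have h1 := congrArg QuaternionAlgebra.imJ hLi
    simp [qi_re, qi_imI, qi_imJ, qi_imK, Quaternion.imJ_mul] at h1
    linarith
  have hJ0 : L1.imJ = 0 := by
    have h1 := congrArg QuaternionAlgebra.imK hLi
    simp [qi_re, qi_imI, qi_imJ, qi_imK, Quaternion.imK_mul] at h1
    linarith
  have hL1norm : ‖L1‖ = 1 := by
    rw [hL1def, norm_mul, norm_mul, norm_inv, hg1, hLnorm]
    norm_num
  have hab : L1.re^2 + L1.imI^2 = 1 := by
    have h1 : normSq L1 = 1 := by rw [Quaternion.normSq_eq_norm_mul_self, hL1norm, mul_one]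
    rw [Quaternion.normSq_def', hJ0, hK0] at h1
    nlinarith [h1]
  set z : ℂ := ⟨L1.re, L1.imI⟩ with hzdef
  have habs : ‖z‖ = 1 := by
    rw [Complex.norm_def, hzdef, Complex.normSq_mk]
    rw [show L1.re * L1.re + L1.imI * L1.imI = 1 by nlinarith [hab]]
    exact Real.sqrt_one
  have hz0 : z ≠ 0 := by
    intro h; rw [h] at habs; simp at habs
  have hcos : Real.cos z.arg = L1.re := by
    rw [Complex.cos_arg hz0, habs, div_one]
  have hsin : Real.sin z.arg = L1.imI := by
    rw [Complex.sin_arg, habs, div_one]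
  have hcL : g * L * g⁻¹ = expQ z.arg qi := by
    rw [← hL1def]
    ext <;> simp [expQ, qi_re, qi_imI, qi_imJ, qi_imK, hcos, hsin, hJ0, hK0]
  refine ⟨g, z.arg, hg1, hcM, hcH, hcL, ?_⟩
  intro g' ℓ' hg'1 hM' hH' hL'
  have hg'0 : g' ≠ 0 := norm_ne_zero_iff.mp (by rw [hg'1]; norm_num)
  set h : ℍ[ℝ] := g' * g⁻¹ with hhdef
  have hh0 : h ≠ 0 := mul_ne_zero hg'0 (inv_ne_zero hg0)
  have hg'M : g' * M = qi * g' := by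
    have := congrArg (· * g') hM'
    simpa [mul_assoc, inv_mul_cancel₀ hg'0] using this
  have hg'H : g' * H = qj * g' := by
    have := congrArg (· * g') hH'
    simpa [mul_assoc, inv_mul_cancel₀ hg'0] using this
  have hMg' : M * g⁻¹ = g⁻¹ * qi := hMg
  have hHg : H * g⁻¹ = g⁻¹ * qj := by
    have h1 : g * (H * g⁻¹) = g * (g⁻¹ * qj) := by
      rw [← mul_assoc, hgH, mul_assoc, mul_inv_cancel₀ hg0, mul_one, ← mul_assoc,
        mul_inv_cancel₀ hg0, one_mul]
    exact mul_left_cancel₀ hg0 h1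
  have hcommi : h * qi = qi * h := by
    rw [hhdef]
    calc g' * g⁻¹ * qi = g' * (M * g⁻¹) := by rw [mul_assoc, hMg]
      _ = qi * (g' * g⁻¹) := by rw [← mul_assoc, hg'M, mul_assoc]
  have hcommj : h * qj = qj * h := by
    rw [hhdef]
    calc g' * g⁻¹ * qj = g' * (H * g⁻¹) := by rw [mul_assoc, hHg]
      _ = qj * (g' * g⁻¹) := by rw [← mul_assoc, hg'H, mul_assoc]
  have hI0 : h.imI = 0 := by
    have h1 := congrArg QuaternionAlgebra.imK hcommj
    simp [qj_re, qj_imI, qj_imJ, qj_imK, Quaternion.imK_mul] at h1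
    linarith
  have hJ0' : h.imJ = 0 := by
    have h1 := congrArg QuaternionAlgebra.imK hcommi
    simp [qi_re, qi_imI, qi_imJ, qi_imK, Quaternion.imK_mul] at h1
    linarith
  have hK0' : h.imK = 0 := by
    have h1 := congrArg QuaternionAlgebra.imJ hcommi
    simp [qi_re, qi_imI, qi_imJ, qi_imK, Quaternion.imJ_mul] at h1
    linarith
  have hreal : h = ((h.re : ℝ) : ℍ[ℝ]) := by
    ext <;> simp [Quaternion.re_coe, Quaternion.imI_coe, Quaternion.imJ_coe,
      Quaternion.imK_coe, hI0, hJ0', hK0']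
  have hg'eq : g' = h * g := by rw [hhdef, mul_assoc, inv_mul_cancel₀ hg0, mul_one]
  have key : g' * L * g'⁻¹ = g * L * g⁻¹ := by
    rw [hg'eq, mul_inv_rev]
    calc h * g * L * (g⁻¹ * h⁻¹) = h * (g * L * g⁻¹) * h⁻¹ := by
          noncomm_ring
      _ = g * L * g⁻¹ * (h * h⁻¹) := by
          rw [hreal, Quaternion.coe_commutes, mul_assoc]
      _ = g * L * g⁻¹ := by rw [mul_inv_cancel₀ hh0, mul_one]
  rw [← hL', key, hcL]
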